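/- arXiv:1805.00544 — 2 statements merged into one kernel-verified Lean document; each statement's English description precedes it below -/
import Mathlib

section
/- For an odd prime p, the Apéry-like number A((p-1)/2) = Σ_{k=0}^{(p-1)/2} C((p-1)/2, k)^2 · C((p-1)/2 + k, k)^2 is congruent modulo p^2 to the truncated hypergeometric sum Σ_{k=0}^{(p-1)/2} ((1/2)_k)^4 / (k!)^4, where the congruence is between rational numbers c_1 ≡ c_2 (mod p^2) meaning c_1 - c_2 ∈ p^2 ℤ_p. -/
open Finset Polynomial

lemma asc_eval2 (k : ℕ) :
    (ascPochhammer ℚ k).eval (1 / 2 : ℚ) = (∏ j ∈ range k, (2 * (j:ℚ) + 1)) / 2 ^ k := by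
  induction k with
  | zero => simp
  | succ n ih =>
    have ih' : (ascPochhammer ℚ n).eval (1 / 2 : ℚ) * 2 ^ n = ∏ j ∈ range n, (2 * (j:ℚ) + 1) := by
      rw [ih]; field_simp
    rw [ascPochhammer_succ_right, Polynomial.eval_mul, prod_range_succ,
      eq_div_iff (by positivity : (2:ℚ)^(n+1) ≠ 0)]
    simp only [Polynomial.eval_add, Polynomial.eval_X, Polynomial.eval_natCast]
    linear_combination (2 * (n:ℚ) + 1) * ih'

lemma keyF (m : ℕ) : ∀ k, k ≤ m →
    (m.choose k : ℚ) * ((m + k).choose k : ℚ) * (4 ^ k * (k.factorial : ℚ) ^ 2) =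
      ∏ j ∈ range k, ((2 * (m : ℚ) + 1) ^ 2 - (2 * j + 1) ^ 2) := by
  intro k
  induction k with
  | zero => simp
  | succ n ih =>
    intro hn
    have hn' : n ≤ m := Nat.le_of_succ_le hn
    have e1 : (m.choose (n + 1) : ℚ) * (n + 1) = (m.choose n : ℚ) * ((m : ℚ) - n) := by
      have h := Nat.choose_succ_right_eq m n
      have hc : ((m - n : ℕ) : ℚ) = (m : ℚ) - n := by rw [Nat.cast_sub hn']
      calc (m.choose (n + 1) : ℚ) * (n + 1) = ((m.choose (n+1) * (n+1) : ℕ) : ℚ) := by push_cast; ring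
        _ = ((m.choose n * (m - n) : ℕ) : ℚ) := by rw [h]
        _ = (m.choose n : ℚ) * ((m:ℚ) - n) := by rw [Nat.cast_mul, hc]
    have e2 : ((m + (n + 1)).choose (n + 1) : ℚ) * (n + 1) =
        ((m + n).choose n : ℚ) * ((m : ℚ) + n + 1) := by
      have h' : (m + n + 1) * ((m + n).choose n) = (m + n + 1).choose (n + 1) * (n + 1) := by
        simpa [Nat.succ_eq_add_one] using Nat.add_one_mul_choose_eq (m + n) n
      have h'' : (m + (n + 1)).choose (n + 1) * (n + 1) = (m + n).choose n * (m + n + 1) := by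
        have hm : m + (n + 1) = m + n + 1 := by ring
        rw [hm, ← h']; ring
      calc ((m + (n + 1)).choose (n + 1) : ℚ) * (n + 1)
          = (((m + (n + 1)).choose (n + 1) * (n + 1) : ℕ) : ℚ) := by push_cast; ring
        _ = (((m + n).choose n * (m + n + 1) : ℕ) : ℚ) := by rw [h'']
        _ = ((m + n).choose n : ℚ) * ((m : ℚ) + n + 1) := by push_cast; ring
    rw [prod_range_succ, ← ih hn', Nat.factorial_succ]
    push_cast
    linear_combination
      (4 * (4:ℚ)^n * (n.factorial:ℚ)^2) * ((((m + (n+1)).choose (n+1) : ℚ)) * ((n:ℚ)+1)) * e1 +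
      (4 * (4:ℚ)^n * (n.factorial:ℚ)^2) * ((m.choose n : ℚ) * ((m:ℚ) - n)) * e2

lemma keyDvd (p k : ℕ) :
    ((p:ℤ)^2) ∣ (∏ j ∈ range k, ((p:ℤ)^2 - (2*j+1)^2))^2 - (∏ j ∈ range k, (2*(j:ℤ)+1))^4 := by
  have hz : ((((∏ j ∈ range k, ((p:ℤ)^2 - (2*j+1)^2))^2 - (∏ j ∈ range k, (2*(j:ℤ)+1))^4 : ℤ)) :
      ZMod (p^2)) = 0 := by
    push_cast
    have hp2 : (p : ZMod (p^2))^2 = 0 := by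
      have : ((p^2 : ℕ) : ZMod (p^2)) = 0 := ZMod.natCast_self _
      push_cast at this
      exact this
    have hfac : ∀ j ∈ range k,
        ((p:ZMod (p^2))^2 - (2*(j:ZMod (p^2))+1)^2) = -((2*(j:ZMod (p^2))+1)^2) := by
      intro j _
      rw [hp2]; ring
    rw [prod_congr rfl hfac]
    have : ∏ j ∈ range k, (-((2*(j:ZMod (p^2))+1)^2)) =
        (-1)^k * ∏ j ∈ range k, ((2*(j:ZMod (p^2))+1)^2) := by
      calc ∏ j ∈ range k, (-((2*(j:ZMod (p^2))+1)^2))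
          = ∏ j ∈ range k, ((-1) * ((2*(j:ZMod (p^2))+1)^2)) := by
            apply prod_congr rfl; intro j _; ring
        _ = (∏ _j ∈ range k, (-1 : ZMod (p^2))) * ∏ j ∈ range k, ((2*(j:ZMod (p^2))+1)^2) :=
            prod_mul_distrib
        _ = (-1)^k * ∏ j ∈ range k, ((2*(j:ZMod (p^2))+1)^2) := by
            rw [prod_const, card_range]
    rw [this, prod_pow]
    have hsgn : (((-1 : ZMod (p^2))^k)^2 : ZMod (p^2)) = 1 := by
      rw [← pow_mul]
      exact Even.neg_one_pow ⟨k, by ring⟩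
    linear_combination ((∏ j ∈ range k, (2*(j:ZMod (p^2))+1))^4) * hsgn
  have h := (ZMod.intCast_zmod_eq_zero_iff_dvd _ (p^2)).mp hz
  exact_mod_cast h

lemma termEq (p : ℕ) (hodd : Odd p) (k : ℕ) (hk : k ≤ (p - 1) / 2) :
    ((((p - 1) / 2).choose k : ℚ))^2 * ((((p - 1) / 2 + k).choose k : ℚ))^2 -
      ((ascPochhammer ℚ k).eval (1 / 2 : ℚ))^4 / (k.factorial : ℚ)^4 =
    (((∏ j ∈ range k, ((p:ℤ)^2 - (2*j+1)^2))^2 - (∏ j ∈ range k, (2*(j:ℤ)+1))^4 : ℤ) : ℚ) /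
      (16 ^ k * (k.factorial : ℚ)^4) := by
  set m := (p - 1) / 2 with hm
  have hpm : (p : ℚ) = 2 * m + 1 := by
    obtain ⟨t, ht⟩ := hodd
    have hmt : m = t := by omega
    rw [ht, hmt]
    push_cast
    ring
  have hA : (m.choose k : ℚ) * ((m + k).choose k : ℚ) * (4 ^ k * (k.factorial : ℚ) ^ 2) =
      ∏ j ∈ range k, ((p : ℚ) ^ 2 - (2 * j + 1) ^ 2) := by
    rw [keyF m k hk]
    exact prod_congr rfl fun j _ => by rw [hpm]
  have hB : (ascPochhammer ℚ k).eval (1 / 2 : ℚ) * 2 ^ k = ∏ j ∈ range k, (2 * (j:ℚ) + 1) := by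
    rw [asc_eval2]
    field_simp
  have h16 : (16:ℚ)^k = ((2:ℚ)^k)^4 := by
    rw [← pow_mul, mul_comm, pow_mul]; norm_num
  have h4 : (4:ℚ)^k = ((2:ℚ)^k)^2 := by
    rw [← pow_mul, mul_comm, pow_mul]; norm_num
  push_cast
  rw [← hA, ← hB, h16, h4]
  have h1 : (k.factorial : ℚ) ≠ 0 := by positivity
  have h2 : (2:ℚ)^k ≠ 0 := by positivity
  field_simp

lemma termBound (p : ℕ) [Fact p.Prime] (hodd : Odd p) (k : ℕ) (hk : k ≤ (p - 1) / 2) :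
    ‖((((((p - 1) / 2).choose k : ℚ))^2 * ((((p - 1) / 2 + k).choose k : ℚ))^2 -
      ((ascPochhammer ℚ k).eval (1 / 2 : ℚ))^4 / (k.factorial : ℚ)^4 : ℚ) : ℚ_[p])‖ ≤
      ((p:ℝ)^2)⁻¹ := by
  have hp := Fact.out (p := p.Prime)
  have hp2 : p ≠ 2 := by rintro rfl; exact (by decide : ¬ Odd 2) hodd
  rw [termEq p hodd k hk]
  set D : ℤ := (∏ j ∈ range k, ((p:ℤ)^2 - (2*j+1)^2))^2 - (∏ j ∈ range k, (2*(j:ℤ)+1))^4 with hD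
  have hnum : ‖((D : ℚ) : ℚ_[p])‖ ≤ ((p:ℝ)^2)⁻¹ := by
    have : ((D : ℚ) : ℚ_[p]) = (D : ℚ_[p]) := by push_cast; ring
    rw [this]
    have := (Padic.norm_int_le_pow_iff_dvd (p := p) D 2).mpr (keyDvd p k)
    calc ‖(D : ℚ_[p])‖ ≤ (p:ℝ) ^ (-(2:ℕ):ℤ) := this
      _ = ((p:ℝ)^2)⁻¹ := by
        rw [zpow_neg, zpow_natCast]
  have hden : ‖(((16 ^ k * (k.factorial : ℚ)^4 : ℚ)) : ℚ_[p])‖ = 1 := by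
    have hcast : (((16 ^ k * (k.factorial : ℚ)^4 : ℚ)) : ℚ_[p]) =
        (((16 ^ k * (k.factorial)^4 : ℕ) : ℤ) : ℚ_[p]) := by push_cast; ring
    rw [hcast]
    have hndvd : ¬ ((p:ℤ) ∣ ((16 ^ k * (k.factorial)^4 : ℕ) : ℤ)) := by
      rw [Int.natCast_dvd_natCast]
      intro hdvd
      rcases (Nat.Prime.dvd_mul hp).mp hdvd with h | h
      · have h1 := hp.dvd_of_dvd_pow h
        have h2 : p ∣ 2 := by
          have h16 : (16 : ℕ) = 2^4 := by norm_num
          rw [h16] at h1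
          exact hp.dvd_of_dvd_pow h1
        exact hp2 ((Nat.prime_dvd_prime_iff_eq hp Nat.prime_two).mp h2)
      · have hpk := hp.dvd_of_dvd_pow h
        have hle := (Nat.Prime.dvd_factorial hp).mp hpk
        have h2 := hp.two_le
        omega
    have hle := Padic.norm_int_le_one (p := p) ((16 ^ k * (k.factorial)^4 : ℕ) : ℤ)
    have hlt := (Padic.norm_intCast_lt_one_iff (p := p) (k := ((16 ^ k * (k.factorial)^4 : ℕ) : ℤ))).not.mpr hndvd
    push_neg at hlt
    linarith
  rw [Rat.cast_div, norm_div, hden, div_one]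
  exact hnum

theorem apery_half_congruence (p : ℕ) [Fact p.Prime] (hp : Odd p) :
    ∃ t : ℤ_[p],
      (((∑ k ∈ Finset.range ((p - 1) / 2 + 1),
            ((((p - 1) / 2).choose k : ℚ))^2 * ((((p - 1) / 2 + k).choose k : ℚ))^2) -
          ∑ k ∈ Finset.range ((p - 1) / 2 + 1),
            ((ascPochhammer ℚ k).eval (1 / 2 : ℚ))^4 / (k.factorial : ℚ)^4 : ℚ) : ℚ_[p]) =
        (p : ℚ_[p])^2 * (t : ℚ_[p]) := by
  have hprime := Fact.out (p := p.Prime)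
  set x : ℚ_[p] := (((∑ k ∈ Finset.range ((p - 1) / 2 + 1),
            ((((p - 1) / 2).choose k : ℚ))^2 * ((((p - 1) / 2 + k).choose k : ℚ))^2) -
          ∑ k ∈ Finset.range ((p - 1) / 2 + 1),
            ((ascPochhammer ℚ k).eval (1 / 2 : ℚ))^4 / (k.factorial : ℚ)^4 : ℚ) : ℚ_[p]) with hx
  have hxsum : x = ∑ k ∈ Finset.range ((p - 1) / 2 + 1),
      ((((((p - 1) / 2).choose k : ℚ))^2 * ((((p - 1) / 2 + k).choose k : ℚ))^2 -
        ((ascPochhammer ℚ k).eval (1 / 2 : ℚ))^4 / (k.factorial : ℚ)^4 : ℚ) : ℚ_[p]) := by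
    rw [hx, ← Finset.sum_sub_distrib]
    push_cast
    rfl
  have hxb : ‖x‖ ≤ ((p:ℝ)^2)⁻¹ := by
    rw [hxsum]
    apply IsUltrametricDist.norm_sum_le_of_forall_le_of_nonneg (by positivity)
    intro k hk
    exact termBound p hp k (by simpa using Nat.lt_succ_iff.mp (Finset.mem_range.mp hk))
  have hpne : ((p : ℚ_[p]))^2 ≠ 0 :=
    pow_ne_zero 2 (Nat.cast_ne_zero.mpr hprime.ne_zero)
  have hnorm : ‖x / (p : ℚ_[p])^2‖ ≤ 1 := by
    have hp0 : (0:ℝ) < (p:ℝ) := by exact_mod_cast hprime.pos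
    rw [norm_div, norm_pow, Padic.norm_p, div_le_one (by positivity), inv_pow]
    exact hxb
  refine ⟨⟨x / (p : ℚ_[p])^2, hnorm⟩, ?_⟩
  show x = (p : ℚ_[p])^2 * (x / (p : ℚ_[p])^2)
  rw [mul_div_cancel₀ _ hpne]
end

section
/- For a prime p > 2 and a p-integral rational z, the congruence (−4/p) · Σ_{k=0}^{p-1} ((1/2)_k)^2/(k!)^2 · z^k ≡ Σ_{k=0}^{p-1} ((1/2)_k)^2/(k!)^2 · (1−z)^k (mod p) holds, where (−4/p) is the quadratic character modulo 4 evaluated at p (equal to (−1)^((p−1)/2)). -/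
open Finset Polynomial

namespace QCSaux

lemma pochhammer_hom {R S : Type*} [CommSemiring R] [CommSemiring S] (f : R →+* S) (n : ℕ)
    (x : R) : (ascPochhammer S n).eval (f x) = f ((ascPochhammer R n).eval x) := by
  rw [← ascPochhammer_map f, Polynomial.eval_map, Polynomial.eval₂_at_apply]

lemma pochhammer_eval_prod {R : Type*} [CommSemiring R] (n : ℕ) (x : R) :
    (ascPochhammer R n).eval x = ∏ i ∈ range n, (x + i) := by
  induction n with
  | zero => simp
  | succ n ih =>
    rw [ascPochhammer_succ_right, eval_mul, ih, prod_range_succ]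
    simp

lemma cast_ne_zero_of_not_dvd {p : ℕ} [Fact p.Prime] {n : ℕ} (h : ¬ p ∣ n) :
    ((n : ℕ) : ZMod p) ≠ 0 := by
  rw [Ne, ZMod.natCast_eq_zero_iff]
  exact h

lemma cast_fact_ne_zero {p : ℕ} [Fact p.Prime] {n : ℕ} (h : n < p) :
    ((n.factorial : ℕ) : ZMod p) ≠ 0 := by
  refine cast_ne_zero_of_not_dvd fun hd => ?_
  exact absurd ((Nat.Prime.dvd_factorial Fact.out).mp hd) (by omega)

lemma lemA {p : ℕ} [Fact p.Prime] {m j : ℕ} (hp : p = 2*m+1) (hj : j ≤ m) :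
    (((2*m - j).choose (m-j) : ℕ) : ZMod p) = (-1)^(m-j) * ((m.choose j : ℕ) : ZMod p) := by
  have hfac : (((m-j).factorial : ℕ) : ZMod p) ≠ 0 := cast_fact_ne_zero (by omega)
  apply mul_left_cancel₀ hfac
  have h1 : (m-j).factorial * (2*m-j).choose (m-j) = (2*m-j).descFactorial (m-j) :=
    (Nat.descFactorial_eq_factorial_mul_choose _ _).symm
  have h2 : (m-j).factorial * m.choose j = m.descFactorial (m-j) := by
    rw [Nat.descFactorial_eq_factorial_mul_choose, Nat.choose_symm hj]
  have h3 : m.descFactorial (m-j) = ∏ i ∈ range (m-j), (j+1+i) := by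
    rw [Nat.descFactorial_eq_prod_range,
      ← Finset.prod_range_reflect (fun i => j+1+i) (m-j)]
    refine Finset.prod_congr rfl fun i hi => ?_
    simp only [Finset.mem_range] at hi
    omega
  have h4 : (((2*m-j).descFactorial (m-j) : ℕ) : ZMod p)
      = (-1)^(m-j) * ((m.descFactorial (m-j) : ℕ) : ZMod p) := by
    rw [Nat.descFactorial_eq_prod_range, h3]
    calc ((∏ i ∈ range (m-j), (2*m-j-i) : ℕ) : ZMod p)
        = ∏ i ∈ range (m-j), ((2*m-j-i : ℕ) : ZMod p) := Nat.cast_prod _ _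
      _ = ∏ i ∈ range (m-j), ((-1) * ((j+1+i : ℕ) : ZMod p)) := by
          refine Finset.prod_congr rfl fun i hi => ?_
          simp only [Finset.mem_range] at hi
          have hs : (2*m-j-i) + (j+1+i) = p := by omega
          have h0 : ((2*m-j-i : ℕ) : ZMod p) + ((j+1+i : ℕ) : ZMod p) = 0 := by
            rw [← Nat.cast_add, hs, ZMod.natCast_self]
          linear_combination h0
      _ = (-1)^(m-j) * ((∏ i ∈ range (m-j), (j+1+i) : ℕ) : ZMod p) := by
          rw [Finset.prod_mul_distrib, Finset.prod_const, Nat.cast_prod]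
          simp [Finset.card_range]
  calc (((m-j).factorial : ℕ) : ZMod p) * (((2*m-j).choose (m-j) : ℕ) : ZMod p)
      = (((2*m-j).descFactorial (m-j) : ℕ) : ZMod p) := by rw [← Nat.cast_mul, h1]
    _ = (-1)^(m-j) * ((m.descFactorial (m-j) : ℕ) : ZMod p) := h4
    _ = (-1)^(m-j) * ((((m-j).factorial * m.choose j : ℕ)) : ZMod p) := by rw [h2]
    _ = (((m-j).factorial : ℕ) : ZMod p) * ((-1)^(m-j) * ((m.choose j : ℕ) : ZMod p)) := by
        push_cast; ring

lemma lemB {m j : ℕ} (hj : j ≤ m) :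
    ∑ k ∈ range (m+1), m.choose k ^ 2 * k.choose j
      = m.choose j * (2*m - j).choose (m-j) := by
  have h1 : ∑ k ∈ range (m+1), m.choose k ^ 2 * k.choose j
      = ∑ k ∈ Ico j (m+1), m.choose k ^ 2 * k.choose j := by
    refine (Finset.sum_subset ?_ ?_).symm
    · intro k hk
      simp only [Finset.mem_Ico, Finset.mem_range] at *
      omega
    · intro k hk hk2
      simp only [Finset.mem_range] at hk
      simp only [Finset.mem_Ico, not_and, not_le] at hk2
      have hkj : k < j := by omega
      rw [Nat.choose_eq_zero_of_lt hkj, mul_zero]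
  rw [h1, Finset.sum_Ico_eq_sum_range]
  have h2 : ∀ t ∈ range (m+1-j), m.choose (j+t) ^ 2 * (j+t).choose j
      = m.choose j * (m.choose (j+t) * (m-j).choose t) := by
    intro t ht
    simp only [mem_range] at ht
    have hkm : j + t ≤ m := by omega
    have hc := Nat.choose_mul (n := m) (Nat.le_add_right j t)
    rw [Nat.add_sub_cancel_left] at hc
    rw [pow_two, mul_assoc, hc]
    ring
  rw [Finset.sum_congr rfl h2, ← Finset.mul_sum]
  congr 1
  have hv : 2*m - j = m + (m - j) := by omega
  rw [hv, Nat.add_choose_eq, Finset.Nat.sum_antidiagonal_eq_sum_range_succ_mk]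
  have hr : m+1-j = (m-j)+1 := by omega
  rw [hr, ← Finset.sum_range_reflect (fun t => m.choose (j+t) * (m-j).choose t) ((m-j)+1)]
  refine Finset.sum_congr rfl fun t ht => ?_
  simp only [mem_range] at ht
  have e1 : j + ((m-j)+1-1-t) = m - t := by omega
  have e2 : (m-j)+1-1-t = (m-j) - t := by omega
  rw [e1, e2, Nat.choose_symm (by omega : t ≤ m)]

lemma lemC {p : ℕ} [Fact p.Prime] {m : ℕ} (hp : p = 2*m+1) (ζ : ZMod p) :
    ∑ k ∈ range (m+1), ((m.choose k : ℕ) : ZMod p)^2 * (1-ζ)^k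
      = (-1)^m * ∑ k ∈ range (m+1), ((m.choose k : ℕ) : ZMod p)^2 * ζ^k := by
  have hexp : ∀ k : ℕ, (1-ζ)^k
      = ∑ j ∈ range (k+1), (-ζ)^j * ((k.choose j : ℕ) : ZMod p) := by
    intro k
    rw [sub_eq_add_neg, add_comm, add_pow]
    refine Finset.sum_congr rfl fun j _ => ?_
    rw [one_pow, mul_one]
  have step1 : ∀ k ∈ range (m+1),
      ((m.choose k : ℕ) : ZMod p)^2 * (1-ζ)^k
        = ∑ j ∈ range (m+1),
            ((m.choose k : ℕ) : ZMod p)^2 * ((-ζ)^j * ((k.choose j : ℕ) : ZMod p)) := by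
    intro k hk
    simp only [mem_range] at hk
    rw [hexp k, Finset.mul_sum]
    refine Finset.sum_subset (Finset.range_subset_range.mpr (by omega)) ?_
    intro j hj hj2
    simp only [mem_range, not_lt] at hj hj2
    rw [Nat.choose_eq_zero_of_lt (show k < j by omega), Nat.cast_zero, mul_zero, mul_zero]
  rw [Finset.sum_congr rfl step1, Finset.sum_comm]
  have step2 : ∀ j ∈ range (m+1),
      ∑ k ∈ range (m+1),
          ((m.choose k : ℕ) : ZMod p)^2 * ((-ζ)^j * ((k.choose j : ℕ) : ZMod p))
        = (-1)^m * (((m.choose j : ℕ) : ZMod p)^2 * ζ^j) := by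
    intro j hj
    simp only [mem_range] at hj
    have hj' : j ≤ m := by omega
    have hsum : ∑ k ∈ range (m+1), ((m.choose k : ℕ) : ZMod p)^2 * ((k.choose j : ℕ) : ZMod p)
        = (((m.choose j * (2*m-j).choose (m-j) : ℕ)) : ZMod p) := by
      rw [← lemB hj']
      push_cast
      rfl
    calc ∑ k ∈ range (m+1),
            ((m.choose k : ℕ) : ZMod p)^2 * ((-ζ)^j * ((k.choose j : ℕ) : ZMod p))
        = (∑ k ∈ range (m+1),
            ((m.choose k : ℕ) : ZMod p)^2 * ((k.choose j : ℕ) : ZMod p)) * (-ζ)^j := by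
          rw [Finset.sum_mul]
          refine Finset.sum_congr rfl fun k _ => by ring
      _ = ((m.choose j : ℕ) : ZMod p) * (((2*m-j).choose (m-j) : ℕ) : ZMod p) * (-ζ)^j := by
          rw [hsum]; push_cast; ring
      _ = (-1)^m * (((m.choose j : ℕ) : ZMod p)^2 * ζ^j) := by
          rw [lemA hp hj', neg_pow]
          have hmj : (-1 : ZMod p)^(m-j) * (-1 : ZMod p)^j = (-1)^m := by
            rw [← pow_add]
            congr 1
            omega
          linear_combination (((m.choose j : ℕ) : ZMod p)^2 * ζ^j) * hmj
  rw [Finset.sum_congr rfl step2, ← Finset.mul_sum]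


lemma coe_sum {p : ℕ} [Fact p.Prime] (s : Finset ℕ) (f : ℕ → ℤ_[p]) :
    ((∑ k ∈ s, f k : ℤ_[p]) : ℚ_[p]) = ∑ k ∈ s, ((f k : ℤ_[p]) : ℚ_[p]) := by
  classical
  induction s using Finset.induction with
  | empty => simp
  | @insert a s h ih => rw [Finset.sum_insert h, Finset.sum_insert h, PadicInt.coe_add, ih]

lemma coe_prod {p : ℕ} [Fact p.Prime] (s : Finset ℕ) (f : ℕ → ℤ_[p]) :
    ((∏ k ∈ s, f k : ℤ_[p]) : ℚ_[p]) = ∏ k ∈ s, ((f k : ℤ_[p]) : ℚ_[p]) := by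
  classical
  induction s using Finset.induction with
  | empty => simp
  | @insert a s h ih => rw [Finset.prod_insert h, Finset.prod_insert h, PadicInt.coe_mul, ih]

lemma coe_poch {p : ℕ} [Fact p.Prime] (n : ℕ) (x : ℤ_[p]) :
    (((ascPochhammer ℤ_[p] n).eval x : ℤ_[p]) : ℚ_[p])
      = (ascPochhammer ℚ_[p] n).eval ((x : ℤ_[p]) : ℚ_[p]) := by
  rw [pochhammer_eval_prod, pochhammer_eval_prod, coe_prod]
  refine Finset.prod_congr rfl fun i _ => ?_
  push_cast
  ring

lemma evalPoch_le {p : ℕ} [Fact p.Prime] {m k : ℕ} (hk : k ≤ m) :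
    (ascPochhammer (ZMod p) k).eval (-(m : ZMod p))
      = (-1)^k * ((k.factorial * m.choose k : ℕ) : ZMod p) := by
  rw [pochhammer_eval_prod, ← Nat.descFactorial_eq_factorial_mul_choose,
    Nat.descFactorial_eq_prod_range, Nat.cast_prod]
  calc ∏ i ∈ range k, (-(m : ZMod p) + i)
      = ∏ i ∈ range k, ((-1) * ((m-i : ℕ) : ZMod p)) := by
        refine Finset.prod_congr rfl fun i hi => ?_
        simp only [mem_range] at hi
        rw [Nat.cast_sub (show i ≤ m by omega)]
        ring
    _ = (-1)^k * ∏ i ∈ range k, ((m-i : ℕ) : ZMod p) := by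
        rw [Finset.prod_mul_distrib, Finset.prod_const, card_range]

lemma evalPoch_gt {p : ℕ} [Fact p.Prime] {m k : ℕ} (hk : m < k) :
    (ascPochhammer (ZMod p) k).eval (-(m : ZMod p)) = 0 := by
  rw [pochhammer_eval_prod]
  exact Finset.prod_eq_zero (Finset.mem_range.mpr hk) (by simp)

end QCSaux



theorem quadratic_character_symmetry (p : ℕ) [Fact p.Prime] (hp : 2 < p)
    (z : ℚ) (hz : ‖(z : ℚ_[p])‖ ≤ 1) :
    ∃ t : ℤ_[p],
      (((-1 : ℚ)^((p - 1) / 2) *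
            ∑ k ∈ Finset.range p,
              ((ascPochhammer ℚ k).eval (1 / 2 : ℚ))^2 / (k.factorial : ℚ)^2 * z^k -
          ∑ k ∈ Finset.range p,
            ((ascPochhammer ℚ k).eval (1 / 2 : ℚ))^2 / (k.factorial : ℚ)^2 * (1 - z)^k : ℚ) : ℚ_[p]) =
        (p : ℚ_[p]) * (t : ℚ_[p]) := by
  classical
  have hprime : p.Prime := Fact.out
  obtain ⟨m, hm⟩ : ∃ m, p = 2*m+1 := by
    have hodd : Odd p := hprime.odd_of_ne_two (by omega)
    obtain ⟨m, hm⟩ := hodd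
    exact ⟨m, by omega⟩
  have hmp : (p - 1) / 2 = m := by omega
  -- units in ℤ_[p]
  have hunit : ∀ n : ℕ, ¬ p ∣ n → IsUnit ((n : ℕ) : ℤ_[p]) := by
    intro n hn
    rw [PadicInt.isUnit_iff]
    refine le_antisymm (PadicInt.norm_le_one _) (not_lt.mp ?_)
    rw [show ((n : ℤ_[p])) = ((n : ℤ) : ℤ_[p]) by push_cast; rfl,
      PadicInt.norm_int_lt_one_iff_dvd]
    exact_mod_cast hn
  have hfactunit : ∀ k : ℕ, k < p → IsUnit ((k.factorial : ℕ) : ℤ_[p]) := by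
    intro k hk
    refine hunit _ fun hd => ?_
    exact absurd ((Nat.Prime.dvd_factorial hprime).mp hd) (by omega)
  obtain ⟨uhalf, huhalf⟩ := (hunit 2 fun hd => by
    have := Nat.le_of_dvd (by norm_num) hd; omega).exists_right_inv
  -- the integral elements
  set zI : ℤ_[p] := ⟨(z : ℚ_[p]), hz⟩ with hzIdef
  set X : ℕ → ℤ_[p] := fun k =>
    ((ascPochhammer ℤ_[p] k).eval uhalf)^2
      * (Ring.inverse ((k.factorial : ℕ) : ℤ_[p]))^2 with hXdef
  set xD : ℤ_[p] :=
    (-1)^m * (∑ k ∈ range p, X k * zI^k) - ∑ k ∈ range p, X k * (1-zI)^k with hxDdef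
  -- Step A : coercion identity
  have hnz : ∀ k : ℕ, ((k.factorial : ℚ_[p])) ≠ 0 :=
    fun k => Nat.cast_ne_zero.mpr k.factorial_ne_zero
  have hinvcoe : ∀ k : ℕ, k < p →
      ((Ring.inverse ((k.factorial : ℕ) : ℤ_[p]) : ℤ_[p]) : ℚ_[p])
        = ((k.factorial : ℚ_[p]))⁻¹ := by
    intro k hk
    have h1 := Ring.mul_inverse_cancel _ (hfactunit k hk)
    have h2 : ((k.factorial : ℚ_[p]))
        * ((Ring.inverse ((k.factorial : ℕ) : ℤ_[p]) : ℤ_[p]) : ℚ_[p]) = 1 := by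
      rw [← PadicInt.coe_natCast, ← PadicInt.coe_mul, h1, PadicInt.coe_one]
    exact eq_inv_of_mul_eq_one_left (by rw [mul_comm] at h2; exact h2)
  have huhalfcoe : ((uhalf : ℤ_[p]) : ℚ_[p]) = (((1:ℚ)/2 : ℚ) : ℚ_[p]) := by
    have h2 : ((2:ℕ) : ℚ_[p]) * ((uhalf : ℤ_[p]) : ℚ_[p]) = 1 := by
      rw [← PadicInt.coe_natCast, ← PadicInt.coe_mul, huhalf, PadicInt.coe_one]
    have h3 : ((2:ℕ) : ℚ_[p]) * (((1:ℚ)/2 : ℚ) : ℚ_[p]) = 1 := by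
      push_cast
      norm_num
    have h2ne : ((2:ℕ) : ℚ_[p]) ≠ 0 := by
      push_cast
      exact two_ne_zero
    exact mul_left_cancel₀ h2ne (h2.trans h3.symm)
  have hXcoe : ∀ k : ℕ, k < p → ((X k : ℤ_[p]) : ℚ_[p])
      = ((((ascPochhammer ℚ k).eval (1/2 : ℚ))^2 / (k.factorial : ℚ)^2 : ℚ) : ℚ_[p]) := by
    intro k hk
    have hev : (((ascPochhammer ℤ_[p] k).eval uhalf : ℤ_[p]) : ℚ_[p])
        = (((ascPochhammer ℚ k).eval (1/2 : ℚ) : ℚ) : ℚ_[p]) := by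
      have e2 := QCSaux.pochhammer_hom (Rat.castHom ℚ_[p]) k ((1:ℚ)/2)
      rw [QCSaux.coe_poch, huhalfcoe,
        show ((((1:ℚ)/2 : ℚ)) : ℚ_[p]) = (Rat.castHom ℚ_[p]) ((1:ℚ)/2) from rfl, e2]
      rfl
    rw [hXdef]
    push_cast [PadicInt.coe_mul, PadicInt.coe_pow]
    rw [hev, hinvcoe k hk]
    field_simp
  -- Step B : toZMod xD = 0
  set φ := (PadicInt.toZMod : ℤ_[p] →+* ZMod p) with hφdef
  set ζ := φ zI with hζdef
  have hp2ne : ((2:ℕ) : ZMod p) ≠ 0 := QCSaux.cast_ne_zero_of_not_dvd (fun hd => by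
    have := Nat.le_of_dvd (by norm_num) hd; omega)
  have hφhalf : φ uhalf = -(m : ZMod p) := by
    have h1 : ((2:ℕ) : ZMod p) * φ uhalf = 1 := by
      rw [← map_natCast φ 2, ← map_mul, huhalf, map_one]
    have h2 : ((2:ℕ) : ZMod p) * (-(m : ZMod p)) = 1 := by
      have hcast : ((2*m+1 : ℕ) : ZMod p) = 0 := by
        rw [← hm]
        exact ZMod.natCast_self p
      push_cast at hcast ⊢
      linear_combination -hcast
    exact mul_left_cancel₀ hp2ne (h1.trans h2.symm)
  have hφfact : ∀ k : ℕ, k < p →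
      ((k.factorial : ℕ) : ZMod p) * φ (Ring.inverse ((k.factorial : ℕ) : ℤ_[p])) = 1 := by
    intro k hk
    rw [← map_natCast φ, ← map_mul, Ring.mul_inverse_cancel _ (hfactunit k hk), map_one]
  have hφX : ∀ k : ℕ, k < p → φ (X k)
      = (if k ≤ m then ((m.choose k : ℕ) : ZMod p)^2 else 0) := by
    intro k hk
    have hev : φ ((ascPochhammer ℤ_[p] k).eval uhalf)
        = (ascPochhammer (ZMod p) k).eval (-(m : ZMod p)) := by
      rw [← hφhalf, QCSaux.pochhammer_hom φ k uhalf]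
    rw [hXdef]
    simp only [map_mul, map_pow, hev]
    by_cases hkm : k ≤ m
    · rw [if_pos hkm, QCSaux.evalPoch_le hkm]
      have hfk := hφfact k hk
      push_cast at hfk ⊢
      have expand : ((-1 : ZMod p)^k * ((k.factorial : ZMod p) * (m.choose k : ZMod p)))^2
          = ((k.factorial : ZMod p))^2 * ((m.choose k : ZMod p))^2 := by
        rw [mul_pow, mul_pow, ← pow_mul, mul_comm k 2, pow_mul]
        norm_num
      rw [expand]
      linear_combination ((k.factorial : ZMod p) * φ (Ring.inverse ((k.factorial : ℕ) : ℤ_[p]))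
        + 1) * ((m.choose k : ZMod p))^2 * hfk
    · rw [if_neg hkm, QCSaux.evalPoch_gt (by omega)]
      simp
  have hφxD : φ xD = 0 := by
    have hsub : range (m+1) ⊆ range p := Finset.range_subset_range.mpr (by omega)
    have t1 : ∑ k ∈ range p, φ (X k) * ζ^k
        = ∑ k ∈ range (m+1), ((m.choose k : ℕ) : ZMod p)^2 * ζ^k := by
      rw [← Finset.sum_subset hsub (fun k hk hk2 => by
        simp only [mem_range, not_lt] at hk hk2
        rw [hφX k (by omega), if_neg (by omega), zero_mul])]
      refine Finset.sum_congr rfl fun k hk => ?_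
      simp only [mem_range] at hk
      rw [hφX k (by omega), if_pos (by omega)]
    have t2 : ∑ k ∈ range p, φ (X k) * (1 - ζ)^k
        = ∑ k ∈ range (m+1), ((m.choose k : ℕ) : ZMod p)^2 * (1-ζ)^k := by
      rw [← Finset.sum_subset hsub (fun k hk hk2 => by
        simp only [mem_range, not_lt] at hk hk2
        rw [hφX k (by omega), if_neg (by omega), zero_mul])]
      refine Finset.sum_congr rfl fun k hk => ?_
      simp only [mem_range] at hk
      rw [hφX k (by omega), if_pos (by omega)]
    rw [hxDdef, map_sub, map_mul, map_pow, map_neg, map_one, map_sum, map_sum]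
    simp only [map_mul, map_pow, map_sub, map_one, ← hζdef]
    rw [t1, t2, QCSaux.lemC hm ζ]
    ring
  -- Step C : conclude
  have hmem : xD ∈ Ideal.span {((p:ℕ) : ℤ_[p])} := by
    rw [← PadicInt.maximalIdeal_eq_span_p, ← PadicInt.ker_toZMod]
    exact hφxD
  obtain ⟨t, ht⟩ := Ideal.mem_span_singleton'.mp hmem
  refine ⟨t, ?_⟩
  have key : ((((-1 : ℚ)^((p - 1) / 2) *
            ∑ k ∈ Finset.range p,
              ((ascPochhammer ℚ k).eval (1 / 2 : ℚ))^2 / (k.factorial : ℚ)^2 * z^k -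
          ∑ k ∈ Finset.range p,
            ((ascPochhammer ℚ k).eval (1 / 2 : ℚ))^2 / (k.factorial : ℚ)^2 * (1 - z)^k : ℚ)) : ℚ_[p])
      = (xD : ℚ_[p]) := by
    rw [hxDdef, PadicInt.coe_sub, PadicInt.coe_mul, PadicInt.coe_pow, PadicInt.coe_neg,
      PadicInt.coe_one]
    rw [QCSaux.coe_sum, QCSaux.coe_sum]
    have hco1 : ∀ k ∈ range p, ((X k * zI^k : ℤ_[p]) : ℚ_[p])
        = ((X k : ℤ_[p]) : ℚ_[p]) * ((z : ℚ_[p]))^k := by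
      intro k _
      rw [PadicInt.coe_mul, PadicInt.coe_pow]
    have hco2 : ∀ k ∈ range p, ((X k * (1-zI)^k : ℤ_[p]) : ℚ_[p])
        = ((X k : ℤ_[p]) : ℚ_[p]) * ((1 : ℚ_[p]) - (z : ℚ_[p]))^k := by
      intro k _
      rw [PadicInt.coe_mul, PadicInt.coe_pow, PadicInt.coe_sub, PadicInt.coe_one]
    rw [Finset.sum_congr rfl hco1, Finset.sum_congr rfl hco2]
    push_cast
    rw [hmp]
    congr 1
    · congr 1
      refine Finset.sum_congr rfl fun k hk => ?_
      simp only [mem_range] at hk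
      rw [hXcoe k hk]
      push_cast
      ring
    · refine Finset.sum_congr rfl fun k hk => ?_
      simp only [mem_range] at hk
      rw [hXcoe k hk]
      push_cast
      ring
  rw [key, ← ht]
  push_cast [PadicInt.coe_mul, PadicInt.coe_natCast]
  ring
end
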